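/- The coproduct of the Hopf algebra of rooted trees admits the combinatorial formula Δ(f) = Σ_{W ∈ I(f)} P^W(f) ⊗ R^W(f), where the sum runs over antichains W of nodes of the forest f, P^W(f) is the forest of subtrees rooted at nodes of W, and R^W(f) is the forest on the remaining nodes. -/

import Mathlib

/-- Planar rooted trees. -/
inductive RTree : Type where
  | node : List RTree → RTree

mutual
/-- All admissible cuts of a tree, i.e. all antichains `W` of nodes of `t`:
each cut yields the pair `(P^W t, R^W t)` of the pruned forest (the subtrees
rooted at the nodes in `W`) and the remaining forest. -/
def cutsT : RTree → Multiset (List RTree × List RTree)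
  | .node l => ([RTree.node l], []) ::ₘ
      (cutsF l).map (fun pr => (pr.1, [RTree.node pr.2]))
/-- All admissible cuts of a forest, with their pruned and remaining parts. -/
def cutsF : List RTree → Multiset (List RTree × List RTree)
  | [] => {([], [])}
  | t :: ts => (cutsT t).bind
      (fun pr => (cutsF ts).map (fun qs => (pr.1 ++ qs.1, pr.2 ++ qs.2)))
end

open TensorProduct

variable (K : Type) [Field K]

/-- The algebra of rooted trees: the monoid algebra on the free monoid of
rooted trees (with basis the rooted forests). -/
abbrev HTrees := MonoidAlgebra K (FreeMonoid RTree)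

/-- The basis element of `HTrees` corresponding to a forest. -/
noncomputable def forestBasis (f : List RTree) : HTrees K :=
  MonoidAlgebra.single (FreeMonoid.ofList f) 1

/-- The grafting operator `B₊`. -/
noncomputable def Bplus : HTrees K →ₗ[K] HTrees K :=
  MonoidAlgebra.mapDomainLinearMap K K
    (fun f : FreeMonoid RTree => FreeMonoid.of (RTree.node (FreeMonoid.toList f)))

lemma forestBasis_append (f g : List RTree) :
    forestBasis K (f ++ g) = forestBasis K f * forestBasis K g := by
  simp [forestBasis, MonoidAlgebra.single_mul_single]

lemma forestBasis_nil : forestBasis K [] = 1 := rfl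

lemma Bplus_forestBasis (l : List RTree) :
    Bplus K (forestBasis K l) = forestBasis K [RTree.node l] := by
  unfold Bplus forestBasis
  rw [MonoidAlgebra.mapDomainLinearMap_single]
  rfl

lemma sum_map_mul_sum_map {α β R : Type*} [NonUnitalNonAssocSemiring R]
    (s : Multiset α) (t : Multiset β) (f : α → R) (g : β → R) :
    (s.map f).sum * (t.map g).sum
      = (s.bind fun x => t.map fun y => f x * g y).sum := by
  induction s using Multiset.induction with
  | empty => simp
  | cons a s ih =>
      simp only [Multiset.map_cons, Multiset.sum_cons, add_mul, ih,
        Multiset.cons_bind, Multiset.sum_add]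
      congr 1
      rw [← Multiset.sum_map_mul_left]

/-- the coproduct of the Hopf algebra of rooted trees (the algebra
morphism determined by `Δ ∘ B₊ = B₊ ⊗ 1 + (id ⊗ B₊) ∘ Δ`) is given on a forest
`f` by the combinatorial formula `Δ f = Σ_{W ∈ I(f)} P^W(f) ⊗ R^W(f)`, summing
over all antichains (admissible cuts) `W` of nodes of `f`. -/
theorem rooted_trees_coproduct_cuts
    (Δ : HTrees K →ₐ[K] (HTrees K ⊗[K] HTrees K))
    (hΔ : ∀ a : HTrees K,
      Δ (Bplus K a) = (Bplus K a) ⊗ₜ[K] (1 : HTrees K) +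
        (TensorProduct.map LinearMap.id (Bplus K)) (Δ a)) :
    ∀ f : List RTree,
      Δ (forestBasis K f) =
        ((cutsF f).map
          (fun pr => forestBasis K pr.1 ⊗ₜ[K] forestBasis K pr.2)).sum := by
  have key : ∀ n, ∀ f : List RTree, sizeOf f ≤ n →
      Δ (forestBasis K f) =
        ((cutsF f).map
          (fun pr => forestBasis K pr.1 ⊗ₜ[K] forestBasis K pr.2)).sum := by
    intro n
    induction n with
    | zero =>
        intro f hf
        exfalso
        cases f <;> simp_all
    | succ n ih =>
        intro f hf
        match f with
        | [] =>
            show Δ 1 = _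
            simp only [cutsF, Multiset.map_singleton, Multiset.sum_singleton,
              forestBasis_nil, map_one, Algebra.TensorProduct.one_def]
        | (RTree.node l) :: ts =>
            have hl : sizeOf l ≤ n := by
              simp only [List.cons.sizeOf_spec, RTree.node.sizeOf_spec] at hf; omega
            have hts : sizeOf ts ≤ n := by
              simp only [List.cons.sizeOf_spec, RTree.node.sizeOf_spec] at hf; omega
            have hsplit : forestBasis K (RTree.node l :: ts)
                = forestBasis K [RTree.node l] * forestBasis K ts :=
              forestBasis_append K [RTree.node l] ts
            have htree : Δ (forestBasis K [RTree.node l]) =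
                ((cutsT (RTree.node l)).map
                  (fun pr => forestBasis K pr.1 ⊗ₜ[K] forestBasis K pr.2)).sum := by
              rw [← Bplus_forestBasis, hΔ, ih l hl, Bplus_forestBasis]
              rw [map_multiset_sum, Multiset.map_map]
              simp only [cutsT, Multiset.map_cons, Multiset.sum_cons, Multiset.map_map,
                Function.comp_def, TensorProduct.map_tmul, LinearMap.id_coe, id_eq,
                Bplus_forestBasis, forestBasis_nil]
            rw [hsplit, map_mul, htree, ih ts hts, sum_map_mul_sum_map]
            rw [show cutsF (RTree.node l :: ts) = (cutsT (RTree.node l)).bind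
                (fun pr => (cutsF ts).map (fun qs => (pr.1 ++ qs.1, pr.2 ++ qs.2)))
              from rfl]
            rw [Multiset.map_bind]
            congr 1
            apply congrArg (Multiset.bind (cutsT (RTree.node l)))
            funext pr
            rw [Multiset.map_map]
            apply congrArg (Multiset.map · (cutsF ts))
            funext qs
            simp [Algebra.TensorProduct.tmul_mul_tmul, forestBasis_append]
  intro f
  exact key (sizeOf f) f le_rfl
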